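/- Let p ≡ 3 (mod 4) be a prime and α ≥ 1. Then the number of triangles in 𝒢_{Z_{p^α}} equals p^{3α−2}(p−1)(p−2)/6. -/

import Mathlib

/-- The set of squares of units of a commutative ring. -/
def QR (R : Type*) [CommRing R] : Set R := {x | ∃ u : Rˣ, (u : R) ^ 2 = x}

/-- The connection set of the quadratic unitary Cayley graph. -/
def TR (R : Type*) [CommRing R] : Set R := QR R ∪ -(QR R)

/-- The quadratic unitary Cayley graph `𝒢_R` as a simple graph:
`x ~ y` iff `x ≠ y` and `x - y ∈ T_R`. -/
def QUCGraph (R : Type*) [CommRing R] : SimpleGraph R where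
  Adj x y := x ≠ y ∧ x - y ∈ TR R
  symm := by
    constructor
    rintro x y ⟨hne, h⟩
    refine ⟨hne.symm, ?_⟩
    have hneg : -(x - y) ∈ TR R := by
      rcases h with h | h
      · exact Or.inr (by simpa using h)
      · exact Or.inl (by simpa using h)
    simpa [neg_sub] using hneg
  loopless := ⟨fun x h => h.1 rfl⟩

lemma sq_eq_one_aux {p α : ℕ} (hp : p.Prime) (hodd : p ≠ 2) (x : ZMod (p ^ α))
    (hx : x ^ 2 = 1) : x = 1 ∨ x = -1 := by
  obtain ⟨a, rfl⟩ := ZMod.intCast_surjective x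
  have h : ((p : ℤ) ^ α) ∣ (a - 1) * (a + 1) := by
    have h0 : ((a ^ 2 - 1 : ℤ) : ZMod (p ^ α)) = 0 := by push_cast; rw [hx]; ring
    rw [ZMod.intCast_zmod_eq_zero_iff_dvd] at h0
    push_cast at h0
    convert h0 using 1; ring
  have hpz : Prime (p : ℤ) := Int.prime_iff_natAbs_prime.mpr (by simpa using hp)
  have hnot : ¬ ((p : ℤ) ∣ (a - 1) ∧ (p : ℤ) ∣ (a + 1)) := by
    rintro ⟨h1, h2⟩
    have : (p : ℤ) ∣ 2 := by have := dvd_sub h2 h1; simpa using this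
    have : (p : ℕ) ∣ 2 := by exact_mod_cast this
    exact hodd ((Nat.prime_dvd_prime_iff_eq hp Nat.prime_two).mp this)
  by_cases h1 : (p : ℤ) ∣ (a + 1)
  · right
    have h2 : ¬ (p : ℤ) ∣ (a - 1) := fun h2 => hnot ⟨h2, h1⟩
    have hd := hpz.pow_dvd_of_dvd_mul_left α h2 h
    have : ((a + 1 : ℤ) : ZMod (p ^ α)) = 0 := by
      rw [ZMod.intCast_zmod_eq_zero_iff_dvd]; exact_mod_cast hd
    push_cast at this
    linear_combination this
  · left
    have hd := hpz.pow_dvd_of_dvd_mul_right α h1 h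
    have : ((a - 1 : ℤ) : ZMod (p ^ α)) = 0 := by
      rw [ZMod.intCast_zmod_eq_zero_iff_dvd]; exact_mod_cast hd
    push_cast at this
    linear_combination this

lemma mem_TR_iff {p α : ℕ} [NeZero (p ^ α)] (hp : p.Prime) (hp4 : p % 4 = 3) (hα : 1 ≤ α)
    (x : ZMod (p ^ α)) : x ∈ TR (ZMod (p ^ α)) ↔ IsUnit x := by
  haveI : Fact p.Prime := ⟨hp⟩
  have hodd : p ≠ 2 := by omega
  have hp3 : 3 ≤ p := by rcases Nat.lt_or_ge p 3 with h | h; · interval_cases p <;> omega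
                         · exact h
  constructor
  · rintro (⟨u, hu⟩ | h)
    · exact hu ▸ (u.isUnit.pow 2)
    · rw [Set.mem_neg] at h
      obtain ⟨u, hu⟩ := h
      have hx : x = -((u : ZMod (p ^ α)) ^ 2) := by rw [hu]; ring
      rw [hx]
      exact (u.isUnit.pow 2).neg
  · rintro ⟨v, rfl⟩
    have hne : (1 : (ZMod (p ^ α))ˣ) ≠ -1 := by
      intro h
      have h2 : (1 : ZMod (p ^ α)) = -1 := by
        have := congrArg (Units.val) h
        simpa using this
      have h3 : ((2 : ℕ) : ZMod (p ^ α)) = 0 := by push_cast; linear_combination h2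
      rw [ZMod.natCast_eq_zero_iff] at h3
      have h4 : p ^ α ≤ 2 := Nat.le_of_dvd (by norm_num) h3
      have h5 : p ≤ p ^ α := Nat.le_self_pow (by omega) p
      omega
    have hKset : (((powMonoidHom 2 : (ZMod (p ^ α))ˣ →* (ZMod (p ^ α))ˣ).ker : Subgroup (ZMod (p ^ α))ˣ) : Set (ZMod (p ^ α))ˣ) = {1, -1} := by
      ext u
      simp only [SetLike.mem_coe, MonoidHom.mem_ker, powMonoidHom_apply,
        Set.mem_insert_iff, Set.mem_singleton_iff]
      constructor
      · intro h
        have hcoe : ((u : ZMod (p ^ α))) ^ 2 = 1 := by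
          have := congrArg (Units.val) h
          rw [Units.val_pow_eq_pow_val, Units.val_one] at this
          exact this
        rcases sq_eq_one_aux hp hodd _ hcoe with h1 | h1
        · left; exact Units.ext (by rw [h1, Units.val_one])
        · right; exact Units.ext (by rw [h1, Units.val_neg, Units.val_one])
      · rintro (rfl | rfl)
        · simp
        · simp
    have hKcard : Nat.card (powMonoidHom 2 : (ZMod (p ^ α))ˣ →* (ZMod (p ^ α))ˣ).ker = 2 := by
      rw [← SetLike.coe_sort_coe, Nat.card_coe_set_eq, hKset, Set.ncard_pair hne]
    have hGcard : Nat.card (ZMod (p ^ α))ˣ = Nat.card (powMonoidHom 2 : (ZMod (p ^ α))ˣ →* (ZMod (p ^ α))ˣ).range * 2 := by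
      rw [Subgroup.card_eq_card_quotient_mul_card_subgroup (powMonoidHom 2 : (ZMod (p ^ α))ˣ →* (ZMod (p ^ α))ˣ).ker, hKcard,
        Nat.card_congr (QuotientGroup.quotientKerEquivRange (powMonoidHom 2 : (ZMod (p ^ α))ˣ →* (ZMod (p ^ α))ˣ)).toEquiv]
    set Q := (powMonoidHom 2 : (ZMod (p ^ α))ˣ →* (ZMod (p ^ α))ˣ).range with hQdef
    have hQpos : 0 < Nat.card Q := Nat.card_pos
    have hQ2 : Nat.card ((ZMod (p ^ α))ˣ ⧸ Q) = 2 := by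
      have h2 : Nat.card Q * 2 = Nat.card ((ZMod (p ^ α))ˣ ⧸ Q) * Nat.card Q := by
        rw [← hGcard]; exact Subgroup.card_eq_card_quotient_mul_card_subgroup Q
      exact Nat.eq_of_mul_eq_mul_right hQpos
        (show Nat.card ((ZMod (p ^ α))ˣ ⧸ Q) * Nat.card Q = 2 * Nat.card Q by rw [← h2]; ring)
    have hnegQ : (-1 : (ZMod (p ^ α))ˣ) ∉ Q := by
      rintro ⟨u, hu⟩
      have hcoe : ((u : ZMod (p ^ α))) ^ 2 = -1 := by
        have := congrArg (Units.val) hu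
        simp only [powMonoidHom_apply] at this
        rw [Units.val_pow_eq_pow_val, Units.val_neg, Units.val_one] at this
        exact this
      have hsqneg : IsSquare (-1 : ZMod p) := by
        have hd : p ∣ p ^ α := dvd_pow_self p (by omega)
        refine ⟨ZMod.castHom hd (ZMod p) u, ?_⟩
        have := congrArg (ZMod.castHom hd (ZMod p)) hcoe
        rw [map_pow, map_neg, map_one] at this
        rw [← this]; ring
      exact (ZMod.exists_sq_eq_neg_one_iff.mp hsqneg) hp4
    by_cases hv : v ∈ Q
    · obtain ⟨u, hu⟩ := hv
      left
      refine ⟨u, ?_⟩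
      have := congrArg (Units.val) hu
      simp only [powMonoidHom_apply] at this
      rw [Units.val_pow_eq_pow_val] at this
      exact this
    · right
      rw [Set.mem_neg]
      have hπv : QuotientGroup.mk' Q v ≠ 1 := by
        rw [Ne, QuotientGroup.mk'_apply, QuotientGroup.eq_one_iff]; exact hv
      have hπn : QuotientGroup.mk' Q (-1) ≠ 1 := by
        rw [Ne, QuotientGroup.mk'_apply, QuotientGroup.eq_one_iff]; exact hnegQ
      obtain ⟨y, -, hy⟩ := (Nat.card_eq_two_iff' (1 : (ZMod (p ^ α))ˣ ⧸ Q)).mp hQ2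
      have heq : QuotientGroup.mk' Q v = QuotientGroup.mk' Q (-1) := by
        rw [hy _ hπv, hy _ hπn]
      have hmem : -v ∈ Q := by
        have h1 : QuotientGroup.mk' Q (-v) = QuotientGroup.mk' Q (-1) * QuotientGroup.mk' Q v := by
          rw [← map_mul]; congr 1; simp
        rw [heq, ← map_mul] at h1
        have h2 : ((-1 : (ZMod (p ^ α))ˣ) * -1) = 1 := by simp
        rw [h2, map_one] at h1
        rwa [QuotientGroup.mk'_apply, QuotientGroup.eq_one_iff] at h1
      obtain ⟨u, hu⟩ := hmem
      refine ⟨u, ?_⟩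
      have := congrArg (Units.val) hu
      simp only [powMonoidHom_apply] at this
      rw [Units.val_pow_eq_pow_val, Units.val_neg] at this
      exact this

open Finset in
lemma fiber_count {p α : ℕ} [NeZero (p ^ α)] (hp : p.Prime) (hα : 1 ≤ α)
    (hd : p ∣ p ^ α) (s : Finset (ZMod p)) :
    (univ.filter (fun x : ZMod (p ^ α) => ZMod.castHom hd (ZMod p) x ∈ s)).card
      = p ^ (α - 1) * s.card := by
  haveI : NeZero p := ⟨hp.ne_zero⟩
  set f := ZMod.castHom hd (ZMod p) with hf
  have hconst : ∀ y : ZMod p,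
      (univ.filter (fun x : ZMod (p ^ α) => f x = y)).card
        = (univ.filter (fun x : ZMod (p ^ α) => f x = 0)).card := by
    intro y
    obtain ⟨x0, hx0⟩ := ZMod.ringHom_surjective f y
    apply Finset.card_nbij' (fun x => x - x0) (fun x => x + x0)
    · intro x hx; simp only [mem_coe, mem_filter, mem_univ, true_and] at hx ⊢
      rw [map_sub, hx, hx0, sub_self]
    · intro x hx; simp only [mem_coe, mem_filter, mem_univ, true_and] at hx ⊢
      rw [map_add, hx, hx0, zero_add]
    · intro x _; simp
    · intro x _; simp
  have hkey : ∀ y : ZMod p,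
      (univ.filter (fun x : ZMod (p ^ α) => f x = y)).card = p ^ (α - 1) := by
    have htot : (univ : Finset (ZMod (p ^ α))).card
        = ∑ y : ZMod p, (univ.filter (fun x : ZMod (p ^ α) => f x = y)).card :=
      Finset.card_eq_sum_card_fiberwise (fun x _ => mem_univ _)
    have h1 : p ^ α = p * (univ.filter (fun x : ZMod (p ^ α) => f x = 0)).card := by
      have h2 : (univ : Finset (ZMod (p ^ α))).card
          = p * (univ.filter (fun x : ZMod (p ^ α) => f x = 0)).card := by
        rw [htot, Finset.sum_congr rfl (fun y _ => hconst y), Finset.sum_const,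
          Finset.card_univ, ZMod.card, smul_eq_mul]
      rw [← h2, Finset.card_univ, ZMod.card]
    intro y
    rw [hconst y]
    have h2 : p * (univ.filter (fun x : ZMod (p ^ α) => f x = 0)).card = p * p ^ (α - 1) := by
      rw [← h1]
      conv_lhs => rw [show α = 1 + (α - 1) by omega]
      rw [pow_add, pow_one]
    exact Nat.eq_of_mul_eq_mul_left hp.pos h2
  rw [Finset.card_eq_sum_card_fiberwise (f := f) (s := univ.filter (fun x : ZMod (p ^ α) => f x ∈ s)) (t := s)
    (fun x hx => (mem_filter.mp hx).2)]
  rw [Finset.sum_congr rfl (fun y hy => ?_), Finset.sum_const, smul_eq_mul, mul_comm]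
  rw [Finset.filter_filter]
  rw [show (univ.filter fun x : ZMod (p^α) => f x ∈ s ∧ f x = y)
      = univ.filter (fun x => f x = y) from Finset.filter_congr (by
        intro x _; constructor
        · rintro ⟨_, h⟩; exact h
        · intro h; exact ⟨h ▸ hy, h⟩)]
  exact hkey y

lemma isUnit_iff_cast {p α : ℕ} [NeZero (p ^ α)] (hp : p.Prime) (hα : 1 ≤ α) (hd : p ∣ p ^ α)
    (x : ZMod (p ^ α)) : IsUnit x ↔ ZMod.castHom hd (ZMod p) x ≠ 0 := by
  haveI : Fact p.Prime := ⟨hp⟩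
  obtain ⟨a, rfl⟩ := ZMod.natCast_zmod_surjective x
  rw [ZMod.isUnit_iff_coprime, map_natCast, Ne, ZMod.natCast_eq_zero_iff,
    Nat.coprime_pow_right_iff (show 0 < α by omega), Nat.coprime_comm,
    hp.coprime_iff_not_dvd]

set_option maxHeartbeats 2000000 in
open Finset SimpleGraph in
open scoped Classical in
/-- For a prime `p ≡ 3 (mod 4)` and `α ≥ 1`, the number of triangles of
`𝒢_{ℤ_{p^α}}` equals `p^{3α−2}(p−1)(p−2)/6`. -/
theorem stmt16 (p α : ℕ) [NeZero (p ^ α)] (hp : p.Prime) (hp4 : p % 4 = 3) (hα : 1 ≤ α) :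
    6 * ((QUCGraph (ZMod (p ^ α))).cliqueFinset 3).card =
      p ^ (3 * α - 2) * (p - 1) * (p - 2) := by
  classical
  haveI : Fact p.Prime := ⟨hp⟩
  haveI : Fact (1 < p ^ α) := ⟨by
    calc 1 < p := hp.one_lt
    _ ≤ p ^ α := Nat.le_self_pow (by omega) p⟩
  have hd : p ∣ p ^ α := dvd_pow_self p (by omega)
  set f := ZMod.castHom hd (ZMod p) with hfdef
  have hAdj : ∀ x y : ZMod (p ^ α), (QUCGraph (ZMod (p ^ α))).Adj x y ↔ IsUnit (x - y) := by
    intro x y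
    change x ≠ y ∧ x - y ∈ TR (ZMod (p ^ α)) ↔ IsUnit (x - y)
    constructor
    · rintro ⟨hne, h⟩; exact (mem_TR_iff hp hp4 hα _).mp h
    · intro h
      refine ⟨?_, (mem_TR_iff hp hp4 hα _).mpr h⟩
      rintro rfl
      rw [sub_self] at h
      exact not_isUnit_zero h
  set S : Finset (ZMod (p ^ α) × ZMod (p ^ α) × ZMod (p ^ α)) :=
    univ.filter (fun t => IsUnit (t.1 - t.2.1) ∧ IsUnit (t.1 - t.2.2) ∧
      IsUnit (t.2.1 - t.2.2)) with hSdef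
  -- Step 1 : 6 * #cliques = #S
  have hstep1 : 6 * ((QUCGraph (ZMod (p ^ α))).cliqueFinset 3).card = S.card := by
    have hmap : ∀ t ∈ S, ({t.1, t.2.1, t.2.2} : Finset (ZMod (p ^ α)))
        ∈ (QUCGraph (ZMod (p ^ α))).cliqueFinset 3 := by
      rintro ⟨x, y, z⟩ ht
      rw [hSdef, mem_filter] at ht
      obtain ⟨-, h1, h2, h3⟩ := ht
      rw [mem_cliqueFinset_iff, is3Clique_triple_iff]
      exact ⟨(hAdj _ _).mpr h1, (hAdj _ _).mpr h2, (hAdj _ _).mpr h3⟩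
    rw [Finset.card_eq_sum_card_fiberwise hmap]
    rw [Finset.sum_congr rfl (fun t ht => ?_), Finset.sum_const, smul_eq_mul, mul_comm]
    -- fiber card = 6
    have ht3 := (mem_cliqueFinset_iff.mp ht).2
    obtain ⟨a, b, c, hab, hac, hbc, rfl⟩ := Finset.card_eq_three.mp ht3
    obtain ⟨hAab, hAac, hAbc⟩ := is3Clique_triple_iff.mp (mem_cliqueFinset_iff.mp ht)
    have hba : b ≠ a := hab.symm
    have hca : c ≠ a := hac.symm
    have hcb : c ≠ b := hbc.symm
    have huab : IsUnit (a - b) := (hAdj _ _).mp hAab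
    have huac : IsUnit (a - c) := (hAdj _ _).mp hAac
    have hubc : IsUnit (b - c) := (hAdj _ _).mp hAbc
    have huneg : ∀ x y : ZMod (p ^ α), IsUnit (x - y) → IsUnit (y - x) := by
      intro x y h; rw [← neg_sub]; exact h.neg
    have hfib : S.filter (fun s => ({s.1, s.2.1, s.2.2} : Finset (ZMod (p ^ α))) = {a, b, c})
        = {(a, b, c), (a, c, b), (b, a, c), (b, c, a), (c, a, b), (c, b, a)} := by
      ext ⟨x, y, z⟩
      simp only [hSdef, Finset.mem_filter, Finset.mem_univ, true_and, and_assoc,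
        Finset.mem_insert, Finset.mem_singleton, Prod.mk.injEq]
      constructor
      · rintro ⟨hu1, hu2, hu3, hset⟩
        have hxy : x ≠ y := by rintro rfl; rw [sub_self] at hu1; exact not_isUnit_zero hu1
        have hxz : x ≠ z := by rintro rfl; rw [sub_self] at hu2; exact not_isUnit_zero hu2
        have hyz : y ≠ z := by rintro rfl; rw [sub_self] at hu3; exact not_isUnit_zero hu3
        have hx : x = a ∨ x = b ∨ x = c := by
          have h := (Finset.ext_iff.mp hset x).mp (by simp)
          simpa using h
        have hy : y = a ∨ y = b ∨ y = c := by
          have h := (Finset.ext_iff.mp hset y).mp (by simp)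
          simpa using h
        have hz : z = a ∨ z = b ∨ z = c := by
          have h := (Finset.ext_iff.mp hset z).mp (by simp)
          simpa using h
        clear hset hu1 hu2 hu3
        rcases hx with rfl | rfl | rfl <;> rcases hy with rfl | rfl | rfl <;>
          rcases hz with rfl | rfl | rfl <;>
          first
            | exact absurd rfl hxy
            | exact absurd rfl hxz
            | exact absurd rfl hyz
            | exact Or.inl ⟨rfl, rfl, rfl⟩
            | exact Or.inr (Or.inl ⟨rfl, rfl, rfl⟩)
            | exact Or.inr (Or.inr (Or.inl ⟨rfl, rfl, rfl⟩))
            | exact Or.inr (Or.inr (Or.inr (Or.inl ⟨rfl, rfl, rfl⟩)))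
            | exact Or.inr (Or.inr (Or.inr (Or.inr (Or.inl ⟨rfl, rfl, rfl⟩))))
            | exact Or.inr (Or.inr (Or.inr (Or.inr (Or.inr ⟨rfl, rfl, rfl⟩))))
      · rintro (⟨rfl, rfl, rfl⟩ | ⟨rfl, rfl, rfl⟩ | ⟨rfl, rfl, rfl⟩ | ⟨rfl, rfl, rfl⟩ |
          ⟨rfl, rfl, rfl⟩ | ⟨rfl, rfl, rfl⟩) <;>
          refine ⟨?_, ?_, ?_, ?_⟩ <;>
          first
            | exact huab | exact huac | exact hubc
            | exact huneg _ _ huab | exact huneg _ _ huac | exact huneg _ _ hubc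
            | (ext w; simp; try tauto)
    rw [hfib]
    rw [Finset.card_insert_of_notMem (by simp [Prod.ext_iff, hab, hac, hbc, hba, hca, hcb]),
      Finset.card_insert_of_notMem (by simp [Prod.ext_iff, hab, hac, hbc, hba, hca, hcb]),
      Finset.card_insert_of_notMem (by simp [Prod.ext_iff, hab, hac, hbc, hba, hca, hcb]),
      Finset.card_insert_of_notMem (by simp [Prod.ext_iff, hab, hac, hbc, hba, hca, hcb]),
      Finset.card_insert_of_notMem (by simp [Prod.ext_iff, hab, hac, hbc, hba, hca, hcb]),
      Finset.card_singleton]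
  -- Step 2 : counting S
  rw [hstep1]
  set P : Finset (ZMod (p ^ α) × ZMod (p ^ α)) :=
    univ.filter (fun a => IsUnit a.1 ∧ IsUnit a.2 ∧ IsUnit (a.1 - a.2)) with hPdef
  have hSP : S.card = p ^ α * P.card := by
    have hbij : S.card = ((univ : Finset (ZMod (p ^ α))) ×ˢ P).card := by
      apply Finset.card_nbij' (fun t => (t.1, (t.2.1 - t.1, t.2.2 - t.1)))
        (fun t => (t.1, (t.2.1 + t.1, t.2.2 + t.1)))
      · rintro ⟨x, y, z⟩ ht
        simp only [Finset.mem_coe, hSdef, mem_filter] at ht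
        obtain ⟨-, h1, h2, h3⟩ := ht
        rw [Finset.mem_coe, Finset.mem_product, hPdef, mem_filter]
        refine ⟨mem_univ _, mem_univ _, ?_, ?_, ?_⟩
        · show IsUnit (y - x); rw [← neg_sub]; exact h1.neg
        · show IsUnit (z - x); rw [← neg_sub]; exact h2.neg
        · show IsUnit (y - x - (z - x))
          have h4 : y - x - (z - x) = y - z := by ring
          rw [h4]; exact h3
      · rintro ⟨x, a, b⟩ ht
        rw [Finset.mem_coe, Finset.mem_product, hPdef, mem_filter] at ht
        obtain ⟨-, -, h1, h2, h3⟩ := ht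
        rw [Finset.mem_coe, hSdef, mem_filter]
        refine ⟨mem_univ _, ?_, ?_, ?_⟩
        · show IsUnit (x - (a + x))
          have h4 : x - (a + x) = -a := by ring
          rw [h4]; exact h1.neg
        · show IsUnit (x - (b + x))
          have h4 : x - (b + x) = -b := by ring
          rw [h4]; exact h2.neg
        · show IsUnit (a + x - (b + x))
          have h4 : a + x - (b + x) = a - b := by ring
          rw [h4]; exact h3
      · rintro ⟨x, y, z⟩ _; simp
      · rintro ⟨x, a, b⟩ _; simp
    rw [hbij, Finset.card_product, card_univ, ZMod.card]
  have hUnitCard : (univ.filter (fun x : ZMod (p ^ α) => IsUnit x)).card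
      = p ^ (α - 1) * (p - 1) := by
    have heq : (univ.filter (fun x : ZMod (p ^ α) => IsUnit x))
        = univ.filter (fun x : ZMod (p ^ α) =>
            ZMod.castHom hd (ZMod p) x ∈ ({0}ᶜ : Finset (ZMod p))) := by
      apply Finset.filter_congr; intro x _
      rw [isUnit_iff_cast hp hα hd]
      simp
    rw [heq, fiber_count hp hα hd, Finset.card_compl, Finset.card_singleton, ZMod.card]
  have hfiber2 : ∀ a : ZMod (p ^ α), IsUnit a →
      (univ.filter (fun b : ZMod (p ^ α) => IsUnit b ∧ IsUnit (a - b))).card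
        = p ^ (α - 1) * (p - 2) := by
    intro a ha
    have hfa : ZMod.castHom hd (ZMod p) a ≠ 0 := (isUnit_iff_cast hp hα hd a).mp ha
    have heq : univ.filter (fun b : ZMod (p ^ α) => IsUnit b ∧ IsUnit (a - b))
        = univ.filter (fun b : ZMod (p ^ α) => ZMod.castHom hd (ZMod p) b
            ∈ ({0, ZMod.castHom hd (ZMod p) a}ᶜ : Finset (ZMod p))) := by
      apply Finset.filter_congr; intro b _
      rw [isUnit_iff_cast hp hα hd, isUnit_iff_cast hp hα hd]
      simp only [Finset.mem_compl, Finset.mem_insert, Finset.mem_singleton, map_sub]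
      constructor
      · rintro ⟨h1, h2⟩ (h | h)
        · exact h1 h
        · rw [h, sub_self] at h2; exact h2 rfl
      · intro h
        refine ⟨fun h0 => h (Or.inl h0), fun h0 => ?_⟩
        exact h (Or.inr (sub_eq_zero.mp h0).symm)
    rw [heq, fiber_count hp hα hd]
    congr 1
    rw [Finset.card_compl, ZMod.card, Finset.card_insert_of_notMem
      (by simpa using Ne.symm hfa), Finset.card_singleton]
  have hPcard : P.card = (p ^ (α - 1) * (p - 1)) * (p ^ (α - 1) * (p - 2)) := by
    have hmap2 : ∀ t ∈ P, t.1 ∈ univ.filter (fun x : ZMod (p ^ α) => IsUnit x) := by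
      rintro ⟨a, b⟩ ht
      rw [hPdef, mem_filter] at ht
      exact mem_filter.mpr ⟨mem_univ _, ht.2.1⟩
    have hfibP : ∀ a ∈ univ.filter (fun x : ZMod (p ^ α) => IsUnit x),
        (P.filter (fun t => t.1 = a)).card = p ^ (α - 1) * (p - 2) := by
      intro a ha
      have haU : IsUnit a := (mem_filter.mp ha).2
      rw [← hfiber2 a haU]
      apply Finset.card_nbij' (fun t => t.2) (fun b => (a, b))
      · rintro ⟨x, b⟩ ht
        rw [Finset.mem_coe, mem_filter] at ht
        obtain ⟨htP, hx⟩ := ht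
        rw [hPdef, mem_filter] at htP
        obtain ⟨-, -, hb, hab⟩ := htP
        simp only at hx
        subst hx
        exact mem_filter.mpr ⟨mem_univ _, hb, hab⟩
      · intro b hb
        rw [Finset.mem_coe, mem_filter] at hb
        obtain ⟨-, hb1, hb2⟩ := hb
        refine mem_filter.mpr ⟨?_, rfl⟩
        rw [hPdef, mem_filter]
        exact ⟨mem_univ _, haU, hb1, hb2⟩
      · rintro ⟨x, b⟩ ht
        rw [Finset.mem_coe, mem_filter] at ht
        have hx : x = a := ht.2
        simp [hx]
      · intro b _; rfl
    rw [Finset.card_eq_sum_card_fiberwise hmap2, Finset.sum_congr rfl hfibP,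
      Finset.sum_const, smul_eq_mul, hUnitCard]
  rw [hSP, hPcard, show 3 * α - 2 = α + ((α - 1) + (α - 1)) from by omega,
    pow_add, pow_add]
  ring
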